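/- Suppose L₀ is a sequential contraction of L. Then the rank of the Lie algebra (the dimension of Cartan subalgebras, equal to the order of the zero root of the generic characteristic polynomial of the adjoint representation) does not decrease: LieAlgebra.rank ℝ L₀ ≥ LieAlgebra.rank ℝ L. -/

import Mathlib

open Filter Module Polynomial

lemma myEvalCharpoly {m : Type*} [Fintype m] [DecidableEq m] (M : Matrix m m ℝ) (t : ℝ) :
    M.charpoly.eval t = ((Matrix.diagonal fun _ => t) - M).det := by
  have h1 : M.charpoly.eval t = (evalRingHom t) M.charmatrix.det := rfl
  rw [Matrix.charpoly] at h1 ⊢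
  rw [h1, RingHom.map_det]
  congr 1
  ext i j
  by_cases h : i = j <;>
    simp [Matrix.charmatrix_apply, Matrix.diagonal_apply, h, Matrix.map_apply, Matrix.sub_apply,
      RingHom.mapMatrix_apply]


/-- `L₀` is a sequential contraction of the real Lie algebra `L`: there is a sequence of
real-linear equivalences `T p : L ≃ₗ[ℝ] L₀` such that the transported brackets converge to the
bracket of `L₀`. -/
def IsSequentialContraction (L L₀ : Type*) [LieRing L] [LieAlgebra ℝ L]
    [LieRing L₀] [LieAlgebra ℝ L₀] [TopologicalSpace L₀] : Prop :=
  ∃ T : ℕ → (L ≃ₗ[ℝ] L₀), ∀ x y : L₀,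
    Tendsto (fun p => T p ⁅(T p).symm x, (T p).symm y⁆) atTop (nhds ⁅x, y⁆)

/-- Under a sequential contraction, the rank of the Lie algebra (the dimension of Cartan
subalgebras) does not decrease. -/
theorem lieAlgebra_rank_le_of_contraction {L L₀ : Type*} [LieRing L] [LieAlgebra ℝ L] [LieRing L₀] [LieAlgebra ℝ L₀]
    [Module.Finite ℝ L] [Module.Finite ℝ L₀]
    [TopologicalSpace L₀] [IsTopologicalAddGroup L₀] [ContinuousSMul ℝ L₀] [T2Space L₀]
    (h : IsSequentialContraction L L₀) :
    LieAlgebra.rank ℝ L₀ ≥ LieAlgebra.rank ℝ L := by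
  obtain ⟨T, hT⟩ := h
  obtain ⟨x₀, hx₀⟩ := LieAlgebra.exists_isRegular ℝ L₀
  set n := finrank ℝ L₀ with hn
  have hnL : finrank ℝ L = n := (T 0).finrank_eq
  set b : Basis (Fin n) ℝ L₀ := finBasis ℝ L₀ with hb
  set q : ℝ[X] := (LieAlgebra.ad ℝ L₀ x₀).charpoly with hq
  -- the conjugated operators and the sequence of characteristic polynomials
  set f : ℕ → Module.End ℝ L₀ := fun p => (T p).conj (LieAlgebra.ad ℝ L ((T p).symm x₀)) with hf
  set Q : ℕ → ℝ[X] := fun p => (LieAlgebra.ad ℝ L ((T p).symm x₀)).charpoly with hQ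
  have hQf : ∀ p, Q p = (LinearMap.toMatrix b b (f p)).charpoly := by
    intro p
    rw [LinearMap.charpoly_toMatrix, hf, LinearEquiv.charpoly_conj]
  -- matrix convergence
  have hM : ∀ k j : Fin n, Tendsto (fun p => LinearMap.toMatrix b b (f p) k j) atTop
      (nhds (LinearMap.toMatrix b b (LieAlgebra.ad ℝ L₀ x₀) k j)) := by
    intro k j
    simp only [LinearMap.toMatrix_apply]
    have hfun : ∀ p, f p (b j) = T p ⁅(T p).symm x₀, (T p).symm (b j)⁆ := by
      intro p; simp [hf, LinearEquiv.conj_apply, LieAlgebra.ad_apply]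
    set ℓ : L₀ →ₗ[ℝ] ℝ := (Finsupp.lapply k).comp (b.repr : L₀ →ₗ[ℝ] (Fin n →₀ ℝ)) with hℓ
    have hℓc : Continuous ℓ := ℓ.continuous_of_finiteDimensional
    have key := (hℓc.tendsto _).comp (hT x₀ (b j))
    simp only [LieAlgebra.ad_apply]
    simpa only [Function.comp_def, hℓ, LinearMap.comp_apply, Finsupp.lapply_apply,
      LinearEquiv.coe_coe, hfun] using key
  -- pointwise convergence of evaluations of the characteristic polynomials
  have hev : ∀ t : ℝ, Tendsto (fun p => (Q p).eval t) atTop (nhds (q.eval t)) := by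
    intro t
    have hdet : Continuous fun A : Matrix (Fin n) (Fin n) ℝ =>
        ((Matrix.diagonal fun _ => t) - A).det :=
      (continuous_const.sub continuous_id).matrix_det
    have hMt : Tendsto (fun p => LinearMap.toMatrix b b (f p)) atTop
        (nhds (LinearMap.toMatrix b b (LieAlgebra.ad ℝ L₀ x₀))) := by
      apply tendsto_pi_nhds.2
      intro k
      apply tendsto_pi_nhds.2
      intro j
      exact hM k j
    have := (hdet.tendsto _).comp hMt
    have e1 : ∀ p, (Q p).eval t =
        ((Matrix.diagonal fun _ => t) - LinearMap.toMatrix b b (f p)).det := by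
      intro p; rw [hQf p, myEvalCharpoly]
    have e2 : q.eval t =
        ((Matrix.diagonal fun _ => t) - LinearMap.toMatrix b b (LieAlgebra.ad ℝ L₀ x₀)).det := by
      rw [hq, ← LinearMap.charpoly_toMatrix (LieAlgebra.ad ℝ L₀ x₀) b, myEvalCharpoly]
    simp only [e1, e2]
    exact this
  -- Lagrange interpolation setup
  set v : Fin (n + 1) → ℝ := fun j => (j : ℕ) with hv
  have hvinj : Set.InjOn v (Finset.univ : Finset (Fin (n + 1))) := by
    intro a _ c _ hac
    exact Fin.val_injective (Nat.cast_injective hac)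
  have hcard : ((Finset.univ : Finset (Fin (n + 1))).card : WithBot ℕ) = (n + 1 : ℕ) := by
    simp
  have hdegq : q.degree < (Finset.univ : Finset (Fin (n + 1))).card := by
    rw [hcard]
    refine lt_of_le_of_lt degree_le_natDegree ?_
    rw [hq, LinearMap.charpoly_natDegree]
    exact_mod_cast Nat.lt_succ_self n
  have hdegQ : ∀ p, (Q p).degree < (Finset.univ : Finset (Fin (n + 1))).card := by
    intro p
    rw [hcard]
    refine lt_of_le_of_lt degree_le_natDegree ?_
    rw [hQ, LinearMap.charpoly_natDegree, hnL]
    exact_mod_cast Nat.lt_succ_self n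
  -- coefficients of q below rank ℝ L vanish
  have hcoeff : ∀ i < LieAlgebra.rank ℝ L, q.coeff i = 0 := by
    intro i hi
    set G : (Fin (n + 1) → ℝ) →ₗ[ℝ] ℝ :=
      (lcoeff ℝ i).comp (Lagrange.interpolate Finset.univ v) with hG
    have hGc : Continuous G := G.continuous_of_finiteDimensional
    have hQG : ∀ p, G (fun j => (Q p).eval (v j)) = (Q p).coeff i := by
      intro p
      have := Lagrange.eq_interpolate hvinj (hdegQ p)
      simp only [hG, LinearMap.comp_apply, lcoeff_apply]
      rw [← this]
    have hqG : G (fun j => q.eval (v j)) = q.coeff i := by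
      have := Lagrange.eq_interpolate hvinj hdegq
      simp only [hG, LinearMap.comp_apply, lcoeff_apply]
      rw [← this]
    have hQz : ∀ p, (Q p).coeff i = 0 := by
      intro p
      apply coeff_eq_zero_of_lt_natTrailingDegree
      exact lt_of_lt_of_le hi (LieAlgebra.rank_le_natTrailingDegree_charpoly_ad ℝ _)
    have hvecs : Tendsto (fun p => fun j => (Q p).eval (v j)) atTop
        (nhds fun j => q.eval (v j)) := tendsto_pi_nhds.2 fun j => hev (v j)
    have hlim : Tendsto (fun p => G (fun j => (Q p).eval (v j))) atTop
        (nhds (G fun j => q.eval (v j))) := (hGc.tendsto _).comp hvecs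
    have hlim0 : Tendsto (fun p => G (fun j => (Q p).eval (v j))) atTop (nhds 0) := by
      simp only [hQG, hQz]
      exact tendsto_const_nhds
    rw [← hqG]
    exact tendsto_nhds_unique hlim hlim0
  -- conclude
  rw [ge_iff_le, ← (LieAlgebra.isRegular_iff_natTrailingDegree_charpoly_eq_rank ℝ x₀).mp hx₀]
  exact le_natTrailingDegree ((LinearMap.charpoly_monic _).ne_zero) hcoeff
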